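/- Let R be a commutative local Artinian algebra over a field with residue field Z and maximal ideal m satisfying dim_Z(m/m²) ≥ 2. Then R admits a quotient ring isomorphic to Z[X_1,X_2]/(X_1², X_1X_2, X_2²). -/

import Mathlib

open Polynomial Pointwise

section SectionLemma

variable {A K : Type*} [CommRing A] [Field K]


lemma aux_isUnit (π : A →+* K) (hsurj : Function.Surjective π)
    (hker : (RingHom.ker π) ^ 2 = ⊥) {a : A} (ha : π a ≠ 0) : IsUnit a := by
  obtain ⟨b, hb⟩ := hsurj (π a)⁻¹
  set n := 1 - a * b with hn
  have hnker : n ∈ RingHom.ker π := by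
    simp [RingHom.mem_ker, hn, hb, mul_inv_cancel₀ ha]
  have hn2 : n * n = 0 := by
    have h1 : n * n ∈ (RingHom.ker π) ^ 2 := by
      rw [pow_two]; exact Ideal.mul_mem_mul hnker hnker
    simpa [hker] using h1
  refine IsUnit.of_mul_eq_one (b * (1 + n)) ?_
  have hab : a * b = 1 - n := by rw [hn]; ring
  calc a * (b * (1 + n)) = (a * b) * (1 + n) := by ring
    _ = (1 - n) * (1 + n) := by rw [hab]
    _ = 1 - n * n := by ring
    _ = 1 := by rw [hn2]; ring



lemma aux_rep (S : Subring A) (r x : A) (hx : x ∈ Subring.closure (↑S ∪ {r})) :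
    ∃ q : Polynomial S, q.eval₂ S.subtype r = x := by
  induction hx using Subring.closure_induction with
  | mem y hy =>
    rcases hy with h | h
    · exact ⟨Polynomial.C ⟨y, h⟩, by simp⟩
    · exact ⟨Polynomial.X, by simpa using (Set.mem_singleton_iff.mp h).symm⟩
  | zero => exact ⟨0, by simp⟩
  | one => exact ⟨1, by simp⟩
  | add x y hx hy ihx ihy =>
    obtain ⟨q1, hq1⟩ := ihx; obtain ⟨q2, hq2⟩ := ihy
    exact ⟨q1 + q2, by simp [hq1, hq2]⟩
  | neg x hx ihx =>
    obtain ⟨q1, hq1⟩ := ihx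
    exact ⟨-q1, by simp [hq1]⟩
  | mul x y hx hy ihx ihy =>
    obtain ⟨q1, hq1⟩ := ihx; obtain ⟨q2, hq2⟩ := ihy
    exact ⟨q1 * q2, by simp [hq1, hq2]⟩

lemma aux_closure_inj (π : A →+* K) (S : Subring A)
    (hinj : ∀ x ∈ S, π x = 0 → x = 0)
    (r : A) (G : Polynomial S) (hG : G.Monic)
    (hGr : G.eval₂ S.subtype r = 0)
    (hmin : ∀ q : Polynomial S, q ≠ 0 → π (q.eval₂ S.subtype r) = 0 → G.degree ≤ q.degree) :
    ∀ x ∈ Subring.closure (↑S ∪ {r}), π x = 0 → x = 0 := by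
  have hA : Nontrivial A := π.domain_nontrivial
  have hS : Nontrivial S := by
    refine ⟨0, 1, fun h => ?_⟩
    have := congrArg (Subtype.val) h
    simp only [OneMemClass.coe_one, ZeroMemClass.coe_zero] at this
    exact zero_ne_one this
  intro x hx hπx
  obtain ⟨q, rfl⟩ := aux_rep S r x hx
  have hmod : (q %ₘ G).eval₂ S.subtype r = q.eval₂ S.subtype r := by
    conv_rhs => rw [← Polynomial.modByMonic_add_div q G]
    simp [hGr]
  by_cases h0 : q %ₘ G = 0
  · rw [← hmod, h0]; simp
  · exfalso
    have h1 : G.degree ≤ (q %ₘ G).degree := hmin _ h0 (by rw [hmod]; exact hπx)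
    exact (Polynomial.degree_modByMonic_lt q hG).not_ge h1

lemma aux_maximal_inv (π : A →+* K) (B S : Subring A)
    (hmax : Maximal (fun T : Subring A => (∀ x ∈ T, π x = 0 → x = 0) ∧ B ≤ T) S)
    {a b : A} (ha : a ∈ S) (hab : a * b = 1) : b ∈ S := by
  set S' := Subring.closure (↑S ∪ {b}) with hS'
  have hSS' : S ≤ S' := by
    intro y hy; exact Subring.subset_closure (Or.inl hy)
  have hbS' : b ∈ S' := Subring.subset_closure (Or.inr rfl)
  have key : ∀ x ∈ S', ∃ n : ℕ, a ^ n * x ∈ S := by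
    intro x hx
    induction hx using Subring.closure_induction with
    | mem y hy =>
      rcases hy with h | h
      · exact ⟨0, by simpa using h⟩
      · refine ⟨1, ?_⟩
        rw [Set.mem_singleton_iff.mp h]
        simpa [pow_one, hab] using S.one_mem
    | zero => exact ⟨0, by simpa using S.zero_mem⟩
    | one => exact ⟨0, by simpa using S.one_mem⟩
    | add x y hx hy ihx ihy =>
      obtain ⟨n1, h1⟩ := ihx; obtain ⟨n2, h2⟩ := ihy
      refine ⟨n1 + n2, ?_⟩
      have : a ^ (n1 + n2) * (x + y) = a ^ n2 * (a ^ n1 * x) + a ^ n1 * (a ^ n2 * y) := by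
        ring
      rw [this]
      exact S.add_mem (S.mul_mem (S.pow_mem ha n2) h1) (S.mul_mem (S.pow_mem ha n1) h2)
    | neg x hx ihx =>
      obtain ⟨n1, h1⟩ := ihx
      exact ⟨n1, by simpa [mul_neg] using S.neg_mem h1⟩
    | mul x y hx hy ihx ihy =>
      obtain ⟨n1, h1⟩ := ihx; obtain ⟨n2, h2⟩ := ihy
      refine ⟨n1 + n2, ?_⟩
      have : a ^ (n1 + n2) * (x * y) = (a ^ n1 * x) * (a ^ n2 * y) := by ring
      rw [this]
      exact S.mul_mem h1 h2
  have hinj' : ∀ x ∈ S', π x = 0 → x = 0 := by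
    intro x hx hπx
    obtain ⟨n, hn⟩ := key x hx
    have h0 : a ^ n * x = 0 := hmax.prop.1 _ hn (by simp [map_mul, hπx])
    have hba : (b * a) ^ n = 1 := by rw [mul_comm] at hab; rw [hab, one_pow]
    calc x = (b * a) ^ n * x := by rw [hba, one_mul]
      _ = b ^ n * (a ^ n * x) := by ring
      _ = 0 := by rw [h0, mul_zero]
  have hle : S' ≤ S := hmax.le_of_ge ⟨hinj', hmax.prop.2.trans hSS'⟩ hSS'
  exact hle hbS'

/-- image of a maximal subring as a subfield -/
def piSubfield (π : A →+* K) (hsurj : Function.Surjective π)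
    (hker : (RingHom.ker π) ^ 2 = ⊥) (S : Subring A)
    (hinv : ∀ a ∈ S, ∀ b, a * b = 1 → b ∈ S) : Subfield K where
  carrier := π '' S
  mul_mem' := by rintro x y ⟨u, hu, rfl⟩ ⟨v, hv, rfl⟩; exact ⟨u * v, S.mul_mem hu hv, map_mul π u v⟩
  add_mem' := by rintro x y ⟨u, hu, rfl⟩ ⟨v, hv, rfl⟩; exact ⟨u + v, S.add_mem hu hv, map_add π u v⟩
  one_mem' := ⟨1, S.one_mem, map_one π⟩
  zero_mem' := ⟨0, S.zero_mem, map_zero π⟩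
  neg_mem' := by rintro x ⟨u, hu, rfl⟩; exact ⟨-u, S.neg_mem hu, map_neg π u⟩
  inv_mem' := by
    rintro x ⟨u, hu, rfl⟩
    by_cases h : π u = 0
    · rw [h, inv_zero]; exact ⟨0, S.zero_mem, map_zero π⟩
    · have hu' : IsUnit u := aux_isUnit π hsurj hker h
      obtain ⟨v, hv⟩ : ∃ v, u * v = 1 := ⟨↑hu'.unit⁻¹, hu'.mul_val_inv⟩
      refine ⟨v, hinv u hu v hv, ?_⟩
      have : π u * π v = 1 := by rw [← map_mul, hv, map_one]
      field_simp
      rw [← this]; ring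

lemma section_of_ext (π : A →+* K) (hsurj : Function.Surjective π)
    (B : Subring A) (hBinj : ∀ x ∈ B, π x = 0 → x = 0)
    (ext : ∀ S : Subring A, B ≤ S → (∀ x ∈ S, π x = 0 → x = 0) →
      (∀ a ∈ S, ∀ b, a * b = 1 → b ∈ S) → ∀ z : K, z ∉ π '' S →
      ∃ r, π r = z ∧ ∃ G : Polynomial S, G.Monic ∧ G.eval₂ S.subtype r = 0 ∧
        (∀ q : Polynomial S, q ≠ 0 → π (q.eval₂ S.subtype r) = 0 → G.degree ≤ q.degree)) :
    ∃ s : K →+* A, ∀ z, π (s z) = z := by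
  -- Zorn's lemma
  obtain ⟨S, hBS, hmax⟩ := zorn_le_nonempty₀
    {T : Subring A | (∀ x ∈ T, π x = 0 → x = 0) ∧ B ≤ T}
    (fun c hcs hchain y hy => by
      refine ⟨sSup c, ⟨?_, ?_⟩, fun z hz => le_sSup hz⟩
      · intro x hx hπx
        obtain ⟨T, hTc, hxT⟩ := (Subring.mem_sSup_of_directedOn ⟨y, hy⟩
          hchain.directedOn).mp hx
        exact (hcs hTc).1 x hxT hπx
      · exact (hcs hy).2.trans (le_sSup hy))
    B ⟨hBinj, le_rfl⟩
  have hinj : ∀ x ∈ S, π x = 0 → x = 0 := hmax.prop.1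
  have hinv : ∀ a ∈ S, ∀ b, a * b = 1 → b ∈ S := fun a ha b hb =>
    aux_maximal_inv π B S hmax ha hb
  -- surjectivity of π on S
  have hsurjS : ∀ z : K, z ∈ π '' S := by
    intro z
    by_contra hz
    obtain ⟨r, hπr, G, hGmonic, hGr, hmin⟩ := ext S hmax.prop.2 hinj hinv z hz
    have hinj' := aux_closure_inj π S hinj r G hGmonic hGr hmin
    have hSS' : S ≤ Subring.closure (↑S ∪ {r}) := fun y hy => Subring.subset_closure (Or.inl hy)
    have hle : Subring.closure (↑S ∪ {r}) ≤ S :=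
      hmax.le_of_ge ⟨hinj', hmax.prop.2.trans hSS'⟩ hSS'
    exact hz ⟨r, hle (Subring.subset_closure (Or.inr rfl)), hπr⟩
  -- build the section
  have hbij : Function.Bijective (π.comp S.subtype) := by
    constructor
    · intro x y hxy
      have : π ((x : A) - y) = 0 := by
        simp only [map_sub]; simpa [sub_eq_zero] using hxy
      have h0 := hinj _ (S.sub_mem x.2 y.2) this
      exact Subtype.ext (sub_eq_zero.mp h0)
    · intro z
      obtain ⟨a, haS, ha⟩ := hsurjS z
      exact ⟨⟨a, haS⟩, ha⟩
  let e := RingEquiv.ofBijective _ hbij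
  refine ⟨S.subtype.comp e.symm.toRingHom, fun z => ?_⟩
  show π (S.subtype (e.symm z)) = z
  have h1 : π (S.subtype (e.symm z)) = e (e.symm z) := rfl
  rw [h1, RingEquiv.apply_symm_apply]


lemma aux_aeval (π : A →+* K) (K' : Subfield K) (S : Subring A) (eS : S →+* K')
    (heS : ∀ x : S, (eS x : K) = π x) (r : A) (q : Polynomial S) :
    aeval (π r) (q.map eS) = π (q.eval₂ S.subtype r) := by
  rw [aeval_def, eval₂_map, hom_eval₂]
  congr 1
  ext x
  exact heS x

lemma aux_ext_char_p (p : ℕ) (hp : p.Prime) [CharP K p]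
    (π : A →+* K) (hsurj : Function.Surjective π) (hker : (RingHom.ker π) ^ 2 = ⊥)
    (S : Subring A) (hpow : ∀ a : A, a ^ p ∈ S)
    (hinj : ∀ x ∈ S, π x = 0 → x = 0)
    (hinv : ∀ a ∈ S, ∀ b, a * b = 1 → b ∈ S) (z : K) (hz : z ∉ π '' S) :
    ∃ r, π r = z ∧ ∃ G : Polynomial S, G.Monic ∧ G.eval₂ S.subtype r = 0 ∧
      (∀ q : Polynomial S, q ≠ 0 → π (q.eval₂ S.subtype r) = 0 → G.degree ≤ q.degree) := by
  haveI : Fact p.Prime := ⟨hp⟩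
  haveI : Nontrivial A := π.domain_nontrivial
  haveI : Nontrivial S := ⟨0, 1, fun h => zero_ne_one
    (congrArg Subtype.val h : ((0 : S) : A) = ((1 : S) : A))⟩
  obtain ⟨r, hr⟩ := hsurj z
  set K' : Subfield K := piSubfield π hsurj hker S hinv with hK'
  have hmemK' : ∀ x ∈ S, π x ∈ K' := fun x hx => ⟨x, hx, rfl⟩
  let eS : S →+* K' := (π.comp S.subtype).codRestrict K'.toSubring (fun x => hmemK' x x.2)
  have heS : ∀ x : S, (eS x : K) = π x := fun x => rfl
  have heSinj : Function.Injective eS := by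
    intro x y hxy
    have h1 : π ((x : A) - y) = 0 := by
      rw [map_sub, sub_eq_zero]
      exact congrArg Subtype.val hxy
    exact Subtype.ext (sub_eq_zero.mp (hinj _ (S.sub_mem x.2 y.2) h1))
  have hzp : z ^ p ∈ K' := by
    rw [← hr, ← map_pow]
    exact hmemK' _ (hpow r)
  set W : Polynomial K' := (X : Polynomial K') ^ p - C ⟨z ^ p, hzp⟩ with hW
  have haev : aeval z W = 0 := by
    rw [hW]
    simp only [map_sub, map_pow, aeval_X, aeval_C]
    have h2 : (algebraMap K' K) ⟨z ^ p, hzp⟩ = z ^ p := rfl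
    rw [h2, sub_self]
  have hmono : W.Monic := monic_X_pow_sub_C _ hp.ne_zero
  have hzint : IsIntegral K' z := ⟨W, hmono, by rwa [aeval_def] at haev⟩
  have hirr : Irreducible W := by
    rw [hW]
    refine X_pow_sub_C_irreducible_of_prime hp ?_
    intro b hb
    apply hz
    have hb' : (b : K) ^ p = z ^ p := congrArg Subtype.val hb
    have h3 : ((b : K) - z) ^ p = 0 := by rw [sub_pow_char, hb', sub_self]
    have hbz : (b : K) = z := sub_eq_zero.mp (pow_eq_zero_iff hp.ne_zero |>.mp h3)
    rw [← hbz]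
    exact b.2
  have hmp : minpoly K' z = W :=
    (minpoly.eq_of_irreducible_of_monic hirr haev hmono).symm
  refine ⟨r, hr, X ^ p - C ⟨r ^ p, hpow r⟩, monic_X_pow_sub_C _ hp.ne_zero, ?_, ?_⟩
  · simp only [eval₂_sub, eval₂_pow, eval₂_X, eval₂_C]
    exact sub_eq_zero.mpr rfl
  · intro q hq hq0
    have hq' : q.map eS ≠ 0 := fun h => hq ((Polynomial.map_eq_zero_iff heSinj).mp h)
    have haevq : aeval z (q.map eS) = 0 := by
      rw [← hr, aux_aeval π K' S eS heS r q]
      exact hq0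
    have hdle : (minpoly K' z).degree ≤ (q.map eS).degree :=
      minpoly.degree_le_of_ne_zero K' z hq' haevq
    rw [hmp] at hdle
    have hdeg1 : W.degree = (p : WithBot ℕ) := by
      rw [hW]; exact degree_X_pow_sub_C hp.pos _
    have hdeg2 : (((X : Polynomial S) ^ p - C (⟨r ^ p, hpow r⟩ : S)) : Polynomial S).degree
        = (p : WithBot ℕ) := degree_X_pow_sub_C hp.pos _
    have hdeg3 : (q.map eS).degree = q.degree := degree_map_eq_of_injective heSinj q
    rw [hdeg2, ← hdeg1]
    rw [hdeg3] at hdle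
    exact hdle

lemma aux_ext_char_zero [CharZero K]
    (F : Type*) [Field F] [Algebra F A] [Algebra F K] [Algebra.IsAlgebraic F K]
    (π : A →+* K) (hπF : ∀ x : F, π (algebraMap F A x) = algebraMap F K x)
    (hsurj : Function.Surjective π) (hker : (RingHom.ker π) ^ 2 = ⊥)
    (S : Subring A) (hFS : ∀ x : F, algebraMap F A x ∈ S)
    (hinj : ∀ x ∈ S, π x = 0 → x = 0)
    (hinv : ∀ a ∈ S, ∀ b, a * b = 1 → b ∈ S) (z : K) (hz : z ∉ π '' S) :
    ∃ r, π r = z ∧ ∃ G : Polynomial S, G.Monic ∧ G.eval₂ S.subtype r = 0 ∧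
      (∀ q : Polynomial S, q ≠ 0 → π (q.eval₂ S.subtype r) = 0 → G.degree ≤ q.degree) := by
  haveI : Nontrivial A := π.domain_nontrivial
  set K' : Subfield K := piSubfield π hsurj hker S hinv with hK'
  have hmemK' : ∀ x ∈ S, π x ∈ K' := fun x hx => ⟨x, hx, rfl⟩
  let eS : S →+* K' := (π.comp S.subtype).codRestrict K'.toSubring (fun x => hmemK' x x.2)
  have heS : ∀ x : S, (eS x : K) = π x := fun x => rfl
  have heSinj : Function.Injective eS := by
    intro x y hxy
    have h1 : π ((x : A) - y) = 0 := by
      rw [map_sub, sub_eq_zero]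
      exact congrArg Subtype.val hxy
    exact Subtype.ext (sub_eq_zero.mp (hinj _ (S.sub_mem x.2 y.2) h1))
  have heSsurj : Function.Surjective eS := by
    rintro ⟨w, x, hxS, hx⟩
    exact ⟨⟨x, hxS⟩, Subtype.ext hx⟩
  let eqv : S ≃+* K' := RingEquiv.ofBijective eS ⟨heSinj, heSsurj⟩
  haveI : CharZero K' := ⟨fun a b hab => by
    have h3 := congrArg K'.subtype hab
    rw [map_natCast, map_natCast] at h3
    exact_mod_cast h3⟩
  -- z is integral over K'
  have hzintF : IsIntegral F z := Algebra.IsIntegral.isIntegral z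
  let χ : F →+* K' := (algebraMap F K).codRestrict K'.toSubring
    (fun x => ⟨algebraMap F A x, hFS x, hπF x⟩)
  have hzint : IsIntegral K' z := by
    refine ⟨(minpoly F z).map χ, (minpoly.monic hzintF).map χ, ?_⟩
    rw [eval₂_map]
    have hcomp : (algebraMap K' K).comp χ = algebraMap F K := rfl
    rw [hcomp, ← aeval_def, minpoly.aeval]
  set f : Polynomial K' := minpoly K' z with hf
  have hfm : f.Monic := minpoly.monic hzint
  have hsep : f.Separable := (minpoly.irreducible hzint).separable
  have hder : aeval z (derivative f) ≠ 0 := by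
    intro h
    obtain ⟨a, b, hab⟩ := hsep
    have h1 := congrArg (aeval z) hab
    simp [hf, minpoly.aeval, h] at h1
    rw [← hf, h, mul_zero] at h1
    exact zero_ne_one h1
  -- Newton's method
  let ρ : K' →+* A := S.subtype.comp (eqv.symm : K' ≃+* S).toRingHom
  have hπρ : ∀ w : K', π (ρ w) = (w : K) := by
    intro w
    have h1 : eqv (eqv.symm w) = w := eqv.apply_symm_apply w
    have h2 : (eS (eqv.symm w) : K) = π ((eqv.symm w : S) : A) := heS _
    have h3 : eqv (eqv.symm w) = eS (eqv.symm w) := rfl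
    calc π (ρ w) = (eS (eqv.symm w) : K) := h2.symm
      _ = ((eqv (eqv.symm w) : K')) := by rw [h3]
      _ = (w : K) := by rw [h1]
  have hcompρ : π.comp ρ = algebraMap K' K := by
    ext w
    exact hπρ w
  set GA : Polynomial A := f.map ρ with hGA
  have hevalπ : ∀ x : A, π (GA.eval x) = aeval (π x) f := by
    intro x
    rw [hGA, eval_map, hom_eval₂, hcompρ, ← aeval_def]
  have hevalπ' : ∀ x : A, π ((derivative GA).eval x) = aeval (π x) (derivative f) := by
    intro x
    rw [hGA, derivative_map, eval_map, hom_eval₂, hcompρ, ← aeval_def]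
  obtain ⟨r₀, hr₀⟩ := hsurj z
  have hu : IsUnit ((derivative GA).eval r₀) := by
    refine aux_isUnit π hsurj hker ?_
    rw [hevalπ', hr₀]
    exact hder
  set v : A := GA.eval r₀ with hv
  have hvker : v ∈ RingHom.ker π := by
    rw [RingHom.mem_ker, hv, hevalπ, hr₀, minpoly.aeval]
  set h : A := -(↑hu.unit⁻¹ * v) with hh
  have hhker : h ∈ RingHom.ker π :=
    (RingHom.ker π).neg_mem ((RingHom.ker π).mul_mem_left _ hvker)
  have hh2 : h ^ 2 = 0 := by
    have h1 : h * h ∈ (RingHom.ker π) ^ 2 := by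
      rw [pow_two]; exact Ideal.mul_mem_mul hhker hhker
    rw [pow_two]
    simpa [hker] using h1
  have heval0 : GA.eval (r₀ + h) = 0 := by
    obtain ⟨k, hk⟩ := GA.binomExpansion r₀ h
    rw [hk, hh2, mul_zero, add_zero, hh]
    rw [mul_neg, ← mul_assoc, hu.mul_val_inv, one_mul]
    simp [hv]
  set r : A := r₀ + h with hrdef
  have hπr : π r = z := by
    have hπh : π h = 0 := RingHom.mem_ker.mp hhker
    rw [hrdef, map_add, hr₀, hπh, add_zero]
  refine ⟨r, hπr, f.map (eqv.symm : K' ≃+* S), hfm.map _, ?_, ?_⟩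
  · have : eval₂ S.subtype r (f.map ((eqv.symm : K' ≃+* S) : K' →+* S)) = GA.eval r := by
      rw [eval₂_map, hGA, eval_map]
      rfl
    rw [this, heval0]
  · intro q hq hq0
    have hq' : q.map eS ≠ 0 := fun hq'' => hq ((Polynomial.map_eq_zero_iff heSinj).mp hq'')
    have haevq : aeval z (q.map eS) = 0 := by
      rw [← hπr, aux_aeval π K' S eS heS r q]
      exact hq0
    have hdle : f.degree ≤ (q.map eS).degree :=
      minpoly.degree_le_of_ne_zero K' z hq' haevq
    have hdeg3 : (q.map eS).degree = q.degree := degree_map_eq_of_injective heSinj q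
    have hdegG : (f.map ((eqv.symm : K' ≃+* S) : K' →+* S)).degree = f.degree :=
      degree_map_eq_of_injective (eqv.symm.injective) f
    rw [hdegG]
    rw [hdeg3] at hdle
    exact hdle

lemma exists_section (F : Type*) [Field F] [Algebra F A] [Algebra F K]
    [Algebra.IsAlgebraic F K]
    (π : A →+* K) (hπF : ∀ x : F, π (algebraMap F A x) = algebraMap F K x)
    (hsurj : Function.Surjective π) (hker : (RingHom.ker π) ^ 2 = ⊥) :
    ∃ s : K →+* A, ∀ z, π (s z) = z := by
  haveI : Nontrivial A := π.domain_nontrivial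
  rcases CharP.char_is_prime_or_zero K (ringChar K) with hp | hp0
  · -- positive characteristic
    set p := ringChar K with hpdef
    haveI : CharP K p := ringChar.charP K
    haveI : Fact p.Prime := ⟨hp⟩
    let B : Subring A :=
      { carrier := Set.range (· ^ p)
        mul_mem' := by rintro x y ⟨a, rfl⟩ ⟨b, rfl⟩; exact ⟨a * b, (mul_pow a b p).symm ▸ rfl⟩
        add_mem' := by
          rintro x y ⟨a, rfl⟩ ⟨b, rfl⟩
          haveI : CharP F p := RingHom.charP (algebraMap F K) (algebraMap F K).injective p
          haveI : CharP A p := charP_of_injective_algebraMap (algebraMap F A).injective p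
          exact ⟨a + b, add_pow_char a b p⟩
        one_mem' := ⟨1, one_pow p⟩
        zero_mem' := ⟨0, zero_pow hp.ne_zero⟩
        neg_mem' := by
          rintro x ⟨a, rfl⟩
          haveI : CharP F p := RingHom.charP (algebraMap F K) (algebraMap F K).injective p
          haveI : CharP A p := charP_of_injective_algebraMap (algebraMap F A).injective p
          refine ⟨-a, ?_⟩
          show (-a) ^ p = -(a ^ p)
          have h1 : ((0 : A) - a) ^ p = 0 ^ p - a ^ p := sub_pow_char 0 a
          simpa [zero_pow hp.ne_zero] using h1 }
    have hBmem : ∀ x : A, x ^ p ∈ B := fun x => ⟨x, rfl⟩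
    have hBinj : ∀ x ∈ B, π x = 0 → x = 0 := by
      rintro x ⟨a, rfl⟩ hx
      show a ^ p = 0
      have hπa : π a = 0 := by
        have h1 : (π a) ^ p = 0 := by rw [← map_pow]; exact hx
        exact pow_eq_zero_iff hp.ne_zero |>.mp h1
      have h2 : a * a = 0 := by
        have h3 : a * a ∈ (RingHom.ker π) ^ 2 := by
          rw [pow_two]; exact Ideal.mul_mem_mul hπa hπa
        simpa [hker] using h3
      calc a ^ p = a ^ (p - 2) * (a * a) := by
            rw [← pow_two, ← pow_add]; congr 1; have h4 : 2 ≤ p := hp.two_le; omega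
        _ = 0 := by rw [h2, mul_zero]
    refine section_of_ext π hsurj B hBinj ?_
    intro S hBS hinj hinv z hz
    exact aux_ext_char_p p hp π hsurj hker S (fun a => hBS (hBmem a)) hinj hinv z hz
  · -- characteristic zero
    haveI : CharP K 0 := by rw [← hp0]; exact ringChar.charP K
    haveI : CharZero K := CharP.charP_to_charZero K
    refine section_of_ext π hsurj (algebraMap F A).range ?_ ?_
    · rintro x ⟨y, rfl⟩ hx
      have h1 : algebraMap F K y = 0 := by rw [← hπF]; exact hx
      have h2 : y = 0 := by
        exact (_root_.map_eq_zero (algebraMap F K)).mp h1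
      rw [h2, map_zero]
    · intro S hBS hinj hinv z hz
      exact aux_ext_char_zero F π hπF hsurj hker S (fun x => hBS ⟨x, rfl⟩) hinj hinv z hz

end SectionLemma

set_option maxHeartbeats 1000000 in
set_option synthInstance.maxHeartbeats 200000 in
/-- **A small quotient of a local Artinian ring with fat cotangent space.**
Let `R` be a finite-dimensional commutative local algebra over a field `F` with residue
field `Z` and maximal ideal `m` satisfying `dim_Z(m/m²) ≥ 2`.  Then `R` has a quotient ring
isomorphic to `Z[X₁,X₂]/(X₁², X₁X₂, X₂²)`, i.e. there is a surjective ring homomorphism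
from `R` onto that ring. -/
theorem exists_small_quotient
    (F R : Type*) [Field F] [CommRing R] [Algebra F R] [FiniteDimensional F R]
    [IsLocalRing R]
    (hdim : 2 ≤ Module.finrank (IsLocalRing.ResidueField R) (IsLocalRing.CotangentSpace R)) :
    ∃ f : R →+* (MvPolynomial (Fin 2) (IsLocalRing.ResidueField R) ⧸
        Ideal.span {(MvPolynomial.X 0 * MvPolynomial.X 0 :
            MvPolynomial (Fin 2) (IsLocalRing.ResidueField R)),
          MvPolynomial.X 0 * MvPolynomial.X 1, MvPolynomial.X 1 * MvPolynomial.X 1}),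
      Function.Surjective f := by
  classical
  haveI : IsNoetherianRing R := isNoetherian_of_tower F inferInstance
  set Z := IsLocalRing.ResidueField R with hZ
  set m := IsLocalRing.maximalIdeal R with hm
  set res := IsLocalRing.residue R with hres
  -- the quotient A = R / m²
  set π : (R ⧸ m ^ 2) →+* Z := Ideal.Quotient.lift (m ^ 2) res
    (fun a ha => Ideal.Quotient.eq_zero_iff_mem.mpr (Ideal.pow_le_self two_ne_zero ha)) with hπ
  have hπmk : ∀ r : R, π (Ideal.Quotient.mk (m ^ 2) r) = res r := fun r =>
    Ideal.Quotient.lift_mk _ _ _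
  have hπsurj : Function.Surjective π := by
    intro z
    obtain ⟨r, hr⟩ := Ideal.Quotient.mk_surjective (I := m) z
    exact ⟨Ideal.Quotient.mk _ r, by rw [hπmk]; exact hr⟩
  have hkerπ : RingHom.ker π = m.map (Ideal.Quotient.mk (m ^ 2)) := by
    apply le_antisymm
    · intro x hx
      obtain ⟨r, rfl⟩ := Ideal.Quotient.mk_surjective x
      have h1 : res r = 0 := by rw [← hπmk]; exact hx
      exact Ideal.mem_map_of_mem _ (Ideal.Quotient.eq_zero_iff_mem.mp h1)
    · rw [Ideal.map_le_iff_le_comap]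
      intro r hr
      show Ideal.Quotient.mk (m ^ 2) r ∈ RingHom.ker π
      rw [RingHom.mem_ker, hπmk]
      exact Ideal.Quotient.eq_zero_iff_mem.mpr hr
  have hker : (RingHom.ker π) ^ 2 = ⊥ := by
    rw [hkerπ, ← Ideal.map_pow, Ideal.map_quotient_self]
  have hπF : ∀ x : F, π (algebraMap F (R ⧸ m ^ 2) x) = algebraMap F Z x := by
    intro x
    have h1 : algebraMap F (R ⧸ m ^ 2) x = Ideal.Quotient.mk (m ^ 2) (algebraMap F R x) := rfl
    rw [h1, hπmk]
    rfl
  haveI : IsScalarTower F R Z := IsScalarTower.of_algebraMap_eq fun x => rfl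
  haveI : Module.Finite F Z := Module.Finite.of_surjective
    (IsScalarTower.toAlgHom F R Z).toLinearMap Ideal.Quotient.mk_surjective
  haveI : Algebra.IsAlgebraic F Z := Algebra.IsAlgebraic.of_finite F Z
  obtain ⟨s, hs⟩ := exists_section F π hπF hπsurj hker
  -- a set-theoretic lift of the section to R
  have hL0 : ∀ z : Z, ∃ r : R, Ideal.Quotient.mk (m ^ 2) r = s z := fun z =>
    Ideal.Quotient.mk_surjective _
  choose L hLmk using hL0
  have hresL : ∀ z, res (L z) = z := fun z => by rw [← hπmk, hLmk, hs]
  -- a surjection of the cotangent space onto Z²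
  set V := IsLocalRing.CotangentSpace R with hV
  let b := Module.finBasis Z V
  let φ : V →ₗ[Z] (Fin 2 → Z) :=
    (LinearMap.funLeft Z Z (Fin.castLE hdim)).comp b.equivFun.toLinearMap
  have hφ : Function.Surjective φ :=
    (LinearMap.funLeft_surjective_of_injective Z Z _
      (Fin.castLE_injective hdim)).comp b.equivFun.surjective
  -- target ring notation
  set I : Ideal (MvPolynomial (Fin 2) Z) := Ideal.span {(MvPolynomial.X 0 * MvPolynomial.X 0 :
      MvPolynomial (Fin 2) Z), MvPolynomial.X 0 * MvPolynomial.X 1,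
      MvPolynomial.X 1 * MvPolynomial.X 1} with hI
  let mkT : MvPolynomial (Fin 2) Z →+* MvPolynomial (Fin 2) Z ⧸ I := Ideal.Quotient.mk I
  let ι : Z →+* MvPolynomial (Fin 2) Z ⧸ I := mkT.comp MvPolynomial.C
  let G : V → MvPolynomial (Fin 2) Z ⧸ I := fun w =>
    mkT (MvPolynomial.C (φ w 0) * MvPolynomial.X 0 + MvPolynomial.C (φ w 1) * MvPolynomial.X 1)
  have hG0 : G 0 = 0 := by
    show mkT _ = 0
    simp
  have hGadd : ∀ w₁ w₂, G (w₁ + w₂) = G w₁ + G w₂ := by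
    intro w₁ w₂
    show mkT _ = mkT _ + mkT _
    rw [← map_add]
    congr 1
    simp only [map_add, Pi.add_apply]
    ring
  have hGsmul : ∀ (z : Z) (w : V), G (z • w) = ι z * G w := by
    intro z w
    show mkT _ = mkT (MvPolynomial.C z) * mkT _
    rw [← map_mul]
    congr 1
    simp only [map_smul, Pi.smul_apply, smul_eq_mul, map_mul]
    ring
  have hJ : ∀ a b : Z, MvPolynomial.C a * MvPolynomial.X 0 + MvPolynomial.C b * MvPolynomial.X 1 ∈
      Ideal.span ({MvPolynomial.X 0, MvPolynomial.X 1} : Set (MvPolynomial (Fin 2) Z)) := by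
    intro a b
    exact Ideal.add_mem _ (Ideal.mul_mem_left _ _ (Ideal.subset_span (by simp)))
      (Ideal.mul_mem_left _ _ (Ideal.subset_span (by simp)))
  have hJJ : Ideal.span ({MvPolynomial.X 0, MvPolynomial.X 1} : Set (MvPolynomial (Fin 2) Z)) *
      Ideal.span ({MvPolynomial.X 0, MvPolynomial.X 1} : Set (MvPolynomial (Fin 2) Z)) ≤ I := by
    rw [Ideal.span_mul_span, Ideal.span_le]
    intro x hx
    simp only [Set.mem_mul, Set.mem_insert_iff, Set.mem_singleton_iff] at hx
    obtain ⟨u, hu, v, hv, rfl⟩ := hx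
    rcases hu with rfl | rfl <;> rcases hv with rfl | rfl
    · exact Ideal.subset_span (by simp)
    · exact Ideal.subset_span (by simp)
    · rw [mul_comm]
      exact Ideal.subset_span (by simp)
    · exact Ideal.subset_span (by simp)
  have hGmul : ∀ w₁ w₂, G w₁ * G w₂ = 0 := by
    intro w₁ w₂
    show mkT _ * mkT _ = 0
    rw [← map_mul, Ideal.Quotient.eq_zero_iff_mem]
    exact hJJ (Ideal.mul_mem_mul (hJ _ _) (hJ _ _))
  -- the derivation-like map
  have hmemD : ∀ r : R, r - L (res r) ∈ m := by
    intro r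
    have h1 : res (r - L (res r)) = 0 := by rw [map_sub, hresL, sub_self]
    exact Ideal.Quotient.eq_zero_iff_mem.mp h1
  let D : R → V := fun r => m.toCotangent ⟨r - L (res r), hmemD r⟩
  have hmem2 : ∀ x : R, Ideal.Quotient.mk (m ^ 2) x = 0 → x ∈ m ^ 2 := fun x h =>
    Ideal.Quotient.eq_zero_iff_mem.mp h
  have hsub : ∀ (x y : ↥m), (x : R) - y ∈ m ^ 2 → m.toCotangent x = m.toCotangent y := by
    intro x y hxy
    have h1 : m.toCotangent (x - y) = 0 := (m.toCotangent_eq_zero _).mpr hxy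
    rw [map_sub] at h1
    exact sub_eq_zero.mp h1
  have hsmulL : ∀ (z : Z) (w : V), z • w = L z • w := by
    intro z w
    conv_lhs => rw [← hresL z]
    exact algebraMap_smul Z (L z) w
  have hDadd : ∀ r₁ r₂, D (r₁ + r₂) = D r₁ + D r₂ := by
    intro r₁ r₂
    have h1 : D r₁ + D r₂ =
        m.toCotangent (⟨r₁ - L (res r₁), hmemD r₁⟩ + ⟨r₂ - L (res r₂), hmemD r₂⟩) :=
      (map_add _ _ _).symm
    rw [h1]
    apply hsub
    show (r₁ + r₂ - L (res (r₁ + r₂))) - ((r₁ - L (res r₁)) + (r₂ - L (res r₂))) ∈ m ^ 2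
    have h2 : (r₁ + r₂ - L (res (r₁ + r₂))) - ((r₁ - L (res r₁)) + (r₂ - L (res r₂)))
        = L (res r₁) + L (res r₂) - L (res r₁ + res r₂) := by
      rw [map_add]
      ring
    rw [h2]
    apply hmem2
    simp [map_sub, map_add, hLmk]
  have hDmul : ∀ r₁ r₂, D (r₁ * r₂) = res r₁ • D r₂ + res r₂ • D r₁ := by
    intro r₁ r₂
    have h1 : res r₁ • D r₂ + res r₂ • D r₁ =
        m.toCotangent (L (res r₁) • ⟨r₂ - L (res r₂), hmemD r₂⟩ +
          L (res r₂) • ⟨r₁ - L (res r₁), hmemD r₁⟩) := by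
      rw [map_add, map_smul, map_smul, ← hsmulL, ← hsmulL]
    rw [h1]
    apply hsub
    show (r₁ * r₂ - L (res (r₁ * r₂))) - (L (res r₁) * (r₂ - L (res r₂)) +
        L (res r₂) * (r₁ - L (res r₁))) ∈ m ^ 2
    have h2 : (r₁ * r₂ - L (res (r₁ * r₂))) - (L (res r₁) * (r₂ - L (res r₂)) +
          L (res r₂) * (r₁ - L (res r₁))) =
        (r₁ - L (res r₁)) * (r₂ - L (res r₂)) +
          (L (res r₁) * L (res r₂) - L (res r₁ * res r₂)) := by
      rw [map_mul]
      ring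
    rw [h2]
    refine Ideal.add_mem _ ?_ ?_
    · rw [pow_two]
      exact Ideal.mul_mem_mul (hmemD r₁) (hmemD r₂)
    · apply hmem2
      simp [map_sub, map_mul, hLmk]
  -- the ring homomorphism
  let f : R →+* MvPolynomial (Fin 2) Z ⧸ I :=
  { toFun := fun r => ι (res r) + G (D r)
    map_one' := by
      have hD1 : D 1 = 0 := by
        apply (m.toCotangent_eq_zero _).mpr
        show (1 : R) - L (res 1) ∈ m ^ 2
        apply hmem2
        simp [map_sub, hLmk]
      show ι (res 1) + G (D 1) = 1
      rw [hD1, hG0, map_one, add_zero, map_one]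
    map_mul' := by
      intro r₁ r₂
      show ι (res (r₁ * r₂)) + G (D (r₁ * r₂)) = (ι (res r₁) + G (D r₁)) * (ι (res r₂) + G (D r₂))
      rw [hDmul, hGadd, hGsmul, hGsmul, map_mul, map_mul]
      linear_combination -(hGmul (D r₁) (D r₂))
    map_zero' := by
      have hD0 : D 0 = 0 := by
        apply (m.toCotangent_eq_zero _).mpr
        show (0 : R) - L (res 0) ∈ m ^ 2
        apply hmem2
        simp [map_sub, hLmk]
      show ι (res 0) + G (D 0) = 0
      rw [hD0, hG0, map_zero, add_zero, map_zero]
    map_add' := by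
      intro r₁ r₂
      show ι (res (r₁ + r₂)) + G (D (r₁ + r₂)) = (ι (res r₁) + G (D r₁)) + (ι (res r₂) + G (D r₂))
      rw [hDadd, hGadd, map_add, map_add]
      ring }
  refine ⟨f, ?_⟩
  have hfval : ∀ r : R, f r = ι (res r) + G (D r) := fun r => rfl
  have hLval : ∀ a : Z, f (L a) = ι a := by
    intro a
    rw [hfval]
    have hDL : D (L a) = 0 := by
      apply (m.toCotangent_eq_zero _).mpr
      show L a - L (res (L a)) ∈ m ^ 2
      rw [hresL, sub_self]
      exact Submodule.zero_mem _
    rw [hDL, hG0, add_zero, hresL]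
  have hXval : ∀ i : Fin 2, ∃ x : R, f x = mkT (MvPolynomial.X i) := by
    intro i
    obtain ⟨w, hw⟩ := hφ (Pi.single i 1)
    obtain ⟨x, hx⟩ := m.toCotangent_surjective w
    refine ⟨(x : R), ?_⟩
    have hres0 : res (x : R) = 0 := Ideal.Quotient.eq_zero_iff_mem.mpr x.2
    have hDx : D (x : R) = w := by
      rw [← hx]
      apply hsub
      show ((x : R) - L (res (x : R))) - (x : R) ∈ m ^ 2
      have h2 : ((x : R) - L (res (x : R))) - (x : R) = -(L (res (x : R))) := by ring
      rw [h2, hres0]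
      apply neg_mem
      apply hmem2
      rw [hLmk, map_zero]
    rw [hfval, hres0, map_zero, zero_add, hDx]
    show mkT (MvPolynomial.C (φ w 0) * MvPolynomial.X 0 +
      MvPolynomial.C (φ w 1) * MvPolynomial.X 1) = mkT (MvPolynomial.X i)
    rw [hw]
    fin_cases i <;> simp
  intro t
  obtain ⟨P, rfl⟩ := Ideal.Quotient.mk_surjective t
  induction P using MvPolynomial.induction_on with
  | C a => exact ⟨L a, hLval a⟩
  | add p q hp hq =>
    obtain ⟨rp, hrp⟩ := hp
    obtain ⟨rq, hrq⟩ := hq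
    exact ⟨rp + rq, by rw [map_add, hrp, hrq, ← map_add]⟩
  | mul_X p i hp =>
    obtain ⟨rp, hrp⟩ := hp
    obtain ⟨rx, hrx⟩ := hXval i
    exact ⟨rp * rx, by rw [map_mul, hrp, hrx, ← map_mul]⟩
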